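/- Let X ≠ {0} be an F-space and T a continuous linear operator on X. Then there is no vector x ∈ X such that for every non-empty open set U ⊆ X, the set N(x,U) = {n ∈ ℕ : Tⁿx ∈ U} has positive lower Banach density. -/

import Mathlib

open Filter

noncomputable def lowerCount (A : Set ℕ) (s : ℕ) : ℝ :=
  liminf (fun k : ℕ => ((A ∩ Set.Icc (k + 1) (k + s)).ncard : ℝ)) atTop

noncomputable def lowerBanachDensity (A : Set ℕ) : ℝ :=
  liminf (fun s : ℕ => lowerCount A s / s) atTop

lemma lowerCount_eq_zero_of_gaps (A : Set ℕ) (s : ℕ)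
    (h : ∀ K : ℕ, ∃ k ≥ K, A ∩ Set.Icc (k + 1) (k + s) = ∅) :
    lowerCount A s = 0 := by
  have hb : IsBoundedUnder (· ≥ ·) atTop
      (fun k : ℕ => ((A ∩ Set.Icc (k + 1) (k + s)).ncard : ℝ)) :=
    isBoundedUnder_of ⟨0, fun k => Nat.cast_nonneg _⟩
  have hb' : IsBoundedUnder (· ≤ ·) atTop
      (fun k : ℕ => ((A ∩ Set.Icc (k + 1) (k + s)).ncard : ℝ)) := by
    refine isBoundedUnder_of ⟨(s : ℝ), fun k => ?_⟩
    have h1 : (A ∩ Set.Icc (k + 1) (k + s)).ncard ≤ (Set.Icc (k + 1) (k + s)).ncard :=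
      Set.ncard_le_ncard Set.inter_subset_right (Set.finite_Icc _ _)
    have h2 : (Set.Icc (k + 1) (k + s)).ncard = s := by
      rw [← Finset.coe_Icc, Set.ncard_coe_finset, Nat.card_Icc]
      omega
    exact_mod_cast h2 ▸ h1
  have hfreq : ∃ᶠ k in atTop,
      ((A ∩ Set.Icc (k + 1) (k + s)).ncard : ℝ) ≤ 0 := by
    rw [frequently_atTop]
    intro K
    obtain ⟨k, hk, he⟩ := h K
    exact ⟨k, hk, by simp [he]⟩
  refine le_antisymm (liminf_le_of_frequently_le hfreq hb) ?_
  exact le_liminf_of_le (hb'.isCoboundedUnder_ge)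
    (Eventually.of_forall fun k => Nat.cast_nonneg _)

lemma lbd_eq_zero_of_gaps (A : Set ℕ)
    (h : ∀ m : ℕ, ∃ n : ℕ, A ∩ Set.Icc (n + 1) (n + m) = ∅) :
    lowerBanachDensity A = 0 := by
  have hc : ∀ s : ℕ, lowerCount A s = 0 := by
    intro s
    apply lowerCount_eq_zero_of_gaps
    intro K
    obtain ⟨n, hn⟩ := h (K + s)
    refine ⟨n + K, Nat.le_add_left K n, ?_⟩
    apply Set.eq_empty_of_subset_empty
    rw [← hn]
    apply Set.inter_subset_inter_right
    intro j hj
    simp only [Set.mem_Icc] at *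
    omega
  have : (fun s : ℕ => lowerCount A s / s) = fun _ => (0 : ℝ) := by
    funext s; rw [hc]; simp
  rw [lowerBanachDensity, this, liminf_const]

/-- On a non-zero F-space, no operator has a vector all of whose return-time sets to
non-empty open sets have positive lower Banach density. -/
theorem no_orbit_with_syndetic_return_sets {X : Type*} [AddCommGroup X] [Module ℝ X]
    [UniformSpace X] [IsUniformAddGroup X] [ContinuousSMul ℝ X] [CompleteSpace X]
    [TopologicalSpace.MetrizableSpace X] [Nontrivial X]
    (T : X →L[ℝ] X) :
    ¬ ∃ x : X, ∀ U : Set X, IsOpen U → U.Nonempty →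
        0 < lowerBanachDensity {n : ℕ | (T ^ n) x ∈ U} := by
  rintro ⟨x, hx⟩
  -- every nonempty open set has a syndetic return set
  have syn : ∀ U : Set X, IsOpen U → U.Nonempty →
      ∃ m : ℕ, ∀ n : ℕ, ∃ j ∈ Set.Icc (n + 1) (n + m), (T ^ j) x ∈ U := by
    intro U hU hUne
    by_contra hcon
    push_neg at hcon
    have : lowerBanachDensity {n : ℕ | (T ^ n) x ∈ U} = 0 := by
      apply lbd_eq_zero_of_gaps
      intro m
      obtain ⟨n, hn⟩ := hcon m
      refine ⟨n, Set.eq_empty_iff_forall_notMem.2 fun j hj => ?_⟩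
      exact hn j hj.2 hj.1
    have := hx U hU hUne
    linarith
  -- x ≠ 0
  have hx0 : x ≠ 0 := by
    intro h0
    obtain ⟨y, hy⟩ := exists_ne (0 : X)
    have hU : IsOpen ({(0 : X)}ᶜ) := isOpen_compl_singleton
    obtain ⟨m, hm⟩ := syn _ hU ⟨y, hy⟩
    obtain ⟨j, _, hj2⟩ := hm 0
    apply hj2
    simp [h0]
  obtain ⟨U, V, hU, hV, hxU, h0V, hUV⟩ := t2_separation hx0
  obtain ⟨m, hm⟩ := syn U hU ⟨x, hxU⟩
  -- W: neighborhood of 0 staying in V for m steps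
  set W : Set X := ⋂ j ∈ Finset.Icc 1 m, (T ^ j) ⁻¹' V with hWdef
  have hWopen : IsOpen W := by
    apply isOpen_biInter_finset
    intro j _
    exact hV.preimage (T ^ j).continuous
  have h0W : (0 : X) ∈ W := by
    simp only [hWdef, Set.mem_iInter]
    intro j _
    simpa using h0V
  obtain ⟨m', hm'⟩ := syn W hWopen ⟨0, h0W⟩
  obtain ⟨n, _, hnW⟩ := hm' 0
  obtain ⟨j, hjmem, hjU⟩ := hm n
  simp only [Set.mem_Icc] at hjmem
  have hjV : (T ^ j) x ∈ V := by
    have h1 : (T ^ (j - n)) ((T ^ n) x) ∈ V := by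
      have hmem : j - n ∈ Finset.Icc 1 m := by rw [Finset.mem_Icc]; omega
      exact Set.mem_iInter₂.1 hnW (j - n) hmem
    have h2 : (T ^ (j - n)) ((T ^ n) x) = (T ^ j) x := by
      conv_rhs => rw [show j = (j - n) + n by omega]
      rw [pow_add, ContinuousLinearMap.mul_apply]
    rwa [h2] at h1
  exact hUV.le_bot ⟨hjU, hjV⟩
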